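/- Let n₁ ≥ 1 and K = 0, let (λ₁,…,λ_{n₁}, μ₁,…,μ_{n₁}) be a real-analytic solution of the system (ODE) on an open interval I, and suppose there are real-analytic functions φ, ψ on I with μᵢ = φλᵢ + ψ for all i and φ(t) ≠ 0 for all t ∈ I. Then τ satisfies on I the second-order equation: τ'' − (n₁ψ + 3τ(φ² + 1)/(2φ))·τ' + τ²·(τφ + (n₁+3)ψ)/(2φ) = 0. -/

import Mathlib

/-- Lemma (`dtau`): for a solution of the ODE system with `K = 0` admitting a
linear relation `μᵢ = φλᵢ + ψ` with `φ ≠ 0`, the function `τ` satisfies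
`τ'' - (n₁ψ + 3τ(φ²+1)/(2φ))τ' + τ²(τφ + (n₁+3)ψ)/(2φ) = 0`. -/
theorem stmt_12 (n₁ : ℕ) (hn : 1 ≤ n₁) (K : ℝ) (hK : K = 0)
    (I : Set ℝ) (hI : IsOpen I) (hIconn : I.OrdConnected)
    (lam mu : Fin n₁ → ℝ → ℝ)
    (hlam : ∀ i, AnalyticOnNhd ℝ (lam i) I)
    (hmu : ∀ i, AnalyticOnNhd ℝ (mu i) I)
    (tau : ℝ → ℝ) (htau : ∀ t, tau t = (2/3) * ∑ i, lam i t)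
    (hode1 : ∀ i, ∀ t ∈ I, HasDerivAt (lam i) ((tau t / 2 + lam i t) * mu i t) t)
    (hode2 : ∀ i, ∀ t ∈ I,
      HasDerivAt (mu i) ((mu i t) ^ 2 - tau t / 2 * lam i t + K) t)
    (hode3 : ∀ t ∈ I,
      -(deriv (deriv tau) t) + deriv tau t * (∑ i, mu i t)
        + tau t * ((tau t) ^ 2 / 4 - ((n₁ : ℝ) + 1) * K + ∑ i, (lam i t) ^ 2) = 0)
    (phi psi : ℝ → ℝ)
    (hphi : AnalyticOnNhd ℝ phi I) (hpsi : AnalyticOnNhd ℝ psi I)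
    (hlin : ∀ i, ∀ t ∈ I, mu i t = phi t * lam i t + psi t)
    (hphi_ne : ∀ t ∈ I, phi t ≠ 0) :
    ∀ t ∈ I,
      deriv (deriv tau) t
        - ((n₁ : ℝ) * psi t + 3 * tau t * ((phi t) ^ 2 + 1) / (2 * phi t))
          * deriv tau t
        + (tau t) ^ 2 * (tau t * phi t + ((n₁ : ℝ) + 3) * psi t) / (2 * phi t)
        = 0 := by
  subst hK
  intro t ht
  have hφ := hphi_ne t ht
  set T := tau t with hT
  set A := deriv tau t with hA
  set B := deriv (deriv tau) t with hB
  set L := ∑ i, lam i t with hLdef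
  set S := ∑ i, (lam i t) ^ 2 with hSdef
  set M := ∑ i, mu i t with hMdef
  -- L = (3/2) T
  have hL : L = (3/2) * T := by
    rw [hT, htau t]; ring
  -- M = phi*L + n₁*psi
  have hM : M = phi t * L + (n₁ : ℝ) * psi t := by
    rw [hMdef, Finset.sum_congr rfl fun i _ => hlin i t ht]
    simp [Finset.sum_add_distrib, Finset.mul_sum, Finset.sum_const, nsmul_eq_mul, hLdef]
  -- derivative of tau at t
  have htaufun : tau = fun s => (2/3) * ∑ i, lam i s := funext htau
  have hderiv : HasDerivAt tau ((2/3) * ∑ i, (tau t / 2 + lam i t) * mu i t) t := by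
    have h0 : HasDerivAt (fun s => (2/3 : ℝ) * ∑ i, lam i s)
        ((2/3) * ∑ i, (tau t / 2 + lam i t) * mu i t) t :=
      (HasDerivAt.fun_sum fun i _ => hode1 i t ht).const_mul (2/3)
    rw [← htaufun] at h0
    exact h0
  have hA2 : A = (2/3) * ∑ i, (tau t / 2 + lam i t) * mu i t := hderiv.deriv
  -- expand the sum using the linear relation
  have hsum : ∑ i, (tau t / 2 + lam i t) * mu i t
      = phi t * S + (T * phi t / 2 + psi t) * L + (n₁ : ℝ) * (T / 2 * psi t) := by
    have e : ∑ i, (tau t / 2 + lam i t) * mu i t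
        = ∑ i, (phi t * (lam i t) ^ 2 + (tau t * phi t / 2 + psi t) * lam i t
            + tau t / 2 * psi t) :=
      Finset.sum_congr rfl fun i _ => by rw [hlin i t ht]; ring
    rw [e, Finset.sum_add_distrib, Finset.sum_add_distrib, ← Finset.mul_sum, ← Finset.mul_sum,
      Finset.sum_const, Finset.card_univ, Fintype.card_fin, nsmul_eq_mul, ← hLdef, ← hSdef, ← hT]
  have h2 : phi t * S = (3/2) * A - (3/4) * T^2 * phi t - (3/2) * T * psi t
      - ((n₁ : ℝ)/2) * T * psi t := by
    rw [hA2, hsum, hL]; ring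
  have h1 : B = A * M + T^3/4 + T * S := by
    have := hode3 t ht
    rw [← hMdef, ← hSdef, ← hT, ← hA, ← hB] at this
    nlinarith [this]
  have key : 2 * phi t * B - (2 * (n₁:ℝ) * psi t * phi t + 3 * T * (phi t)^2 + 3 * T) * A
      + T^3 * phi t + ((n₁:ℝ) + 3) * T^2 * psi t = 0 := by
    linear_combination 2 * phi t * h1 + 2 * phi t * A * hM + 2 * phi t * A * phi t * hL + 2 * T * h2
  have hfinal : B - ((n₁ : ℝ) * psi t + 3 * T * ((phi t) ^ 2 + 1) / (2 * phi t)) * A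
      + T ^ 2 * (T * phi t + ((n₁ : ℝ) + 3) * psi t) / (2 * phi t)
      = (2 * phi t * B - (2 * (n₁:ℝ) * psi t * phi t + 3 * T * (phi t)^2 + 3 * T) * A
      + T^3 * phi t + ((n₁:ℝ) + 3) * T^2 * psi t) / (2 * phi t) := by
    field_simp
    ring
  rw [hfinal, key, zero_div]
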